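/- Let n be a non-negative integer and let k be any integer. Then 6·(∑_{j=0}^{2n−1} G(j+k)²)·(∑_{j=0}^{2n−1} G(j+k)·(G(j+k+1) + G(j+k−1))) = F(2n)²·(G(k+n−2)³·(G(k+n−1) + G(k+n−3)) + 4·G(k+n−1)³·(G(k+n) + G(k+n−2)) + 4·G(k+n)³·(G(k+n+1) + G(k+n−1)) + G(k+n+1)³·(G(k+n+2) + G(k+n))). -/

import Mathlib

/-- an identity derived from Melham's Candido-type identity. -/
theorem statement10 (F : ℤ → ℤ)
    (hF0 : F 0 = 0) (hF1 : F 1 = 1) (hF : ∀ n : ℤ, F n = F (n - 1) + F (n - 2))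
    (G : ℤ → ℝ) (hG : ∀ n : ℤ, G n = G (n - 1) + G (n - 2))
    (n : ℕ) (k : ℤ) :
    6 * (∑ j ∈ Finset.range (2 * n), G (j + k) ^ 2) *
        (∑ j ∈ Finset.range (2 * n), G (j + k) * (G (j + k + 1) + G (j + k - 1))) =
      (F (2 * n) : ℝ) ^ 2 *
        (G (k + n - 2) ^ 3 * (G (k + n - 1) + G (k + n - 3))
          + 4 * G (k + n - 1) ^ 3 * (G (k + n) + G (k + n - 2))
          + 4 * G (k + n) ^ 3 * (G (k + n + 1) + G (k + n - 1))
          + G (k + n + 1) ^ 3 * (G (k + n + 2) + G (k + n))) := by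
  have hF' : ∀ m : ℤ, F (m + 2) = F (m + 1) + F m := by
    intro m
    have h := hF (m + 2)
    simp only [show m + 2 - 1 = m + 1 by ring, show m + 2 - 2 = m by ring] at h
    exact h
  have hG' : ∀ m : ℤ, G (m + 2) = G (m + 1) + G m := by
    intro m
    have h := hG (m + 2)
    simp only [show m + 2 - 1 = m + 1 by ring, show m + 2 - 2 = m by ring] at h
    exact h
  have hFm1 : F (-1) = 1 := by
    have h := hF 1
    simp only [show (1:ℤ) - 1 = 0 by ring, show (1:ℤ) - 2 = -1 by ring, hF0] at h
    omega
  -- shift lemma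
  have shift : ∀ s : ℤ, G (k + s) = (F (s - 1) : ℝ) * G k + (F s : ℝ) * G (k + 1) ∧
      G (k + s + 1) = (F s : ℝ) * G k + (F (s + 1) : ℝ) * G (k + 1) := by
    intro s
    induction s using Int.induction_on with
    | zero => simp [hFm1, hF0, hF1]
    | succ i ih =>
      obtain ⟨h1, h2⟩ := ih
      constructor
      · rw [show k + ((i : ℤ) + 1) = k + (i:ℤ) + 1 by ring,
          show ((i:ℤ) + 1) - 1 = (i:ℤ) by ring]
        exact h2
      · have hg := hG' (k + i)
        have hf : (F ((i:ℤ) + 2) : ℝ) = (F ((i:ℤ) + 1) : ℝ) + (F (i:ℤ) : ℝ) := by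
          exact_mod_cast congrArg (fun z : ℤ => (z : ℝ)) (hF' (i : ℤ))
        have hfc : (F ((i:ℤ) + 1) : ℝ) = (F (i:ℤ) : ℝ) + (F ((i:ℤ) - 1) : ℝ) := by
          have h := hF ((i:ℤ) + 1)
          rw [show (i:ℤ) + 1 - 1 = (i:ℤ) by ring, show (i:ℤ) + 1 - 2 = (i:ℤ) - 1 by ring] at h
          exact_mod_cast congrArg (fun z : ℤ => (z : ℝ)) h
        rw [show k + ((i:ℤ) + 1) + 1 = k + (i:ℤ) + 2 by ring,
          show ((i:ℤ) + 1) + 1 = (i:ℤ) + 2 by ring]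
        linear_combination hg + h1 + h2 - G k * hfc - G (k + 1) * hf
    | pred i ih =>
      obtain ⟨h1, h2⟩ := ih
      have hfa : (F (-(i:ℤ)) : ℝ) = (F (-(i:ℤ) - 1) : ℝ) + (F (-(i:ℤ) - 2) : ℝ) := by
        exact_mod_cast congrArg (fun z : ℤ => (z : ℝ)) (hF (-(i:ℤ)))
      have hfb : (F (-(i:ℤ) + 1) : ℝ) = (F (-(i:ℤ)) : ℝ) + (F (-(i:ℤ) - 1) : ℝ) := by
        have h := hF (-(i:ℤ) + 1)
        rw [show -(i:ℤ) + 1 - 1 = -(i:ℤ) by ring,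
          show -(i:ℤ) + 1 - 2 = -(i:ℤ) - 1 by ring] at h
        exact_mod_cast congrArg (fun z : ℤ => (z : ℝ)) h
      have hg := hG (k + -(i:ℤ) + 1)
      rw [show k + -(i:ℤ) + 1 - 1 = k + -(i:ℤ) by ring,
        show k + -(i:ℤ) + 1 - 2 = k + (-(i:ℤ) - 1) by ring] at hg
      constructor
      · rw [show -(i:ℤ) - 1 - 1 = -(i:ℤ) - 2 by ring]
        linear_combination -hg + h2 - h1 + G k * hfa + G (k + 1) * hfb
      · rw [show k + (-(i:ℤ) - 1) + 1 = k + -(i:ℤ) by ring,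
          show -(i:ℤ) - 1 + 1 = -(i:ℤ) by ring]
        exact h1
  -- telescoping sums
  have S1 : ∀ m : ℕ, ∑ j ∈ Finset.range m, G (j + k) ^ 2 =
      G (k + m - 1) * G (k + m) - G (k - 1) * G k := by
    intro m
    induction m with
    | zero => simp
    | succ m ih =>
      rw [Finset.sum_range_succ, ih]
      have hg : G (k + (m:ℤ) + 1) = G (k + (m:ℤ)) + G (k + (m:ℤ) - 1) := by
        have h := hG (k + (m:ℤ) + 1)
        rw [show k + (m:ℤ) + 1 - 1 = k + (m:ℤ) by ring,
          show k + (m:ℤ) + 1 - 2 = k + (m:ℤ) - 1 by ring] at h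
        exact h
      push_cast
      rw [show k + ((m:ℤ) + 1) - 1 = k + (m:ℤ) by ring,
        show k + ((m:ℤ) + 1) = k + (m:ℤ) + 1 by ring,
        show (m:ℤ) + k = k + (m:ℤ) by ring]
      linear_combination (-(G (k + (m:ℤ)))) * hg
  have S2 : ∀ m : ℕ, ∑ j ∈ Finset.range m, G (j + k) * (G (j + k + 1) + G (j + k - 1)) =
      G (k + m) ^ 2 + G (k + m - 1) ^ 2 - G k ^ 2 - G (k - 1) ^ 2 := by
    intro m
    induction m with
    | zero => simp
    | succ m ih =>
      rw [Finset.sum_range_succ, ih]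
      have hg : G (k + (m:ℤ) + 1) = G (k + (m:ℤ)) + G (k + (m:ℤ) - 1) := by
        have h := hG (k + (m:ℤ) + 1)
        rw [show k + (m:ℤ) + 1 - 1 = k + (m:ℤ) by ring,
          show k + (m:ℤ) + 1 - 2 = k + (m:ℤ) - 1 by ring] at h
        exact h
      push_cast
      rw [show (m:ℤ) + k + 1 = k + (m:ℤ) + 1 by ring,
        show (m:ℤ) + k - 1 = k + (m:ℤ) - 1 by ring,
        show (m:ℤ) + k = k + (m:ℤ) by ring,
        show k + ((m:ℤ) + 1) - 1 = k + (m:ℤ) by ring,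
        show k + ((m:ℤ) + 1) = k + (m:ℤ) + 1 by ring]
      linear_combination (-(G (k + (m:ℤ) + 1) + G (k + (m:ℤ) - 1))) * hg
  -- Cassini (squared)
  have cass : ∀ m : ℕ, (F ((m:ℤ) + 1) * F ((m:ℤ) - 1) - F (m:ℤ) ^ 2) ^ 2 = 1 := by
    intro m
    induction m with
    | zero => norm_num [hF0, hF1, hFm1]
    | succ m ih =>
      have e1 := hF' (m : ℤ)
      have e2 : F ((m:ℤ) - 1) = F ((m:ℤ) + 1) - F (m:ℤ) := by
        have h := hF ((m:ℤ) + 1)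
        rw [show (m:ℤ) + 1 - 1 = (m:ℤ) by ring, show (m:ℤ) + 1 - 2 = (m:ℤ) - 1 by ring] at h
        omega
      have key : F ((m:ℤ) + 2) * F (m:ℤ) - F ((m:ℤ) + 1) ^ 2 =
          -(F ((m:ℤ) + 1) * F ((m:ℤ) - 1) - F (m:ℤ) ^ 2) := by
        rw [e1, e2]; ring
      push_cast
      rw [show (m:ℤ) + 1 + 1 = (m:ℤ) + 2 by ring, show (m:ℤ) + 1 - 1 = (m:ℤ) by ring, key]
      rw [show (-(F ((m:ℤ) + 1) * F ((m:ℤ) - 1) - F (m:ℤ) ^ 2)) ^ 2 =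
        (F ((m:ℤ) + 1) * F ((m:ℤ) - 1) - F (m:ℤ) ^ 2) ^ 2 by ring]
      exact ih
  -- doubling identities
  have doub : ∀ m : ℕ, F (2 * (m:ℤ)) = F (m:ℤ) * (2 * F ((m:ℤ) + 1) - F (m:ℤ)) ∧
      F (2 * (m:ℤ) - 1) = F (m:ℤ) ^ 2 + (F ((m:ℤ) + 1) - F (m:ℤ)) ^ 2 := by
    intro m
    induction m with
    | zero => norm_num [hF0, hF1, hFm1]
    | succ m ih =>
      obtain ⟨d1, d2⟩ := ih
      have e1 := hF' (m : ℤ)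
      have ea : F (2 * (m:ℤ) + 1) = F (2 * (m:ℤ)) + F (2 * (m:ℤ) - 1) := by
        have h := hF (2 * (m:ℤ) + 1)
        rw [show 2 * (m:ℤ) + 1 - 1 = 2 * (m:ℤ) by ring,
          show 2 * (m:ℤ) + 1 - 2 = 2 * (m:ℤ) - 1 by ring] at h
        exact h
      have eb : F (2 * (m:ℤ) + 2) = F (2 * (m:ℤ) + 1) + F (2 * (m:ℤ)) := hF' (2 * (m:ℤ))
      push_cast
      constructor
      · rw [show 2 * ((m:ℤ) + 1) = 2 * (m:ℤ) + 2 by ring,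
          show (m:ℤ) + 1 + 1 = (m:ℤ) + 2 by ring, eb, ea, e1]
        linear_combination 2 * d1 + d2
      · rw [show 2 * ((m:ℤ) + 1) - 1 = 2 * (m:ℤ) + 1 by ring,
          show (m:ℤ) + 1 + 1 = (m:ℤ) + 2 by ring, ea, e1]
        linear_combination d1 + d2
  -- main computation
  have gm1 : G (k - 1) = G (k + 1) - G k := by
    have h := hG (k + 1)
    rw [show k + 1 - 1 = k by ring, show k + 1 - 2 = k - 1 by ring] at h
    linarith
  have g2n : G (k + 2 * (n:ℤ)) =
      (F (2 * (n:ℤ) - 1) : ℝ) * G k + (F (2 * (n:ℤ)) : ℝ) * G (k + 1) := by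
    have h := (shift (2 * (n:ℤ))).1
    rwa [show 2 * (n:ℤ) - 1 = 2 * (n:ℤ) - 1 by ring] at h
  have g2n1 : G (k + 2 * (n:ℤ) - 1) =
      (F (2 * (n:ℤ) - 2) : ℝ) * G k + (F (2 * (n:ℤ) - 1) : ℝ) * G (k + 1) := by
    have h := (shift (2 * (n:ℤ) - 1)).1
    rwa [show k + (2 * (n:ℤ) - 1) = k + 2 * (n:ℤ) - 1 by ring,
      show 2 * (n:ℤ) - 1 - 1 = 2 * (n:ℤ) - 2 by ring] at h
  have gn3 : G (k + (n:ℤ) - 3) =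
      (F ((n:ℤ) - 4) : ℝ) * G k + (F ((n:ℤ) - 3) : ℝ) * G (k + 1) := by
    have h := (shift ((n:ℤ) - 3)).1
    rwa [show k + ((n:ℤ) - 3) = k + (n:ℤ) - 3 by ring,
      show (n:ℤ) - 3 - 1 = (n:ℤ) - 4 by ring] at h
  have gn2 : G (k + (n:ℤ) - 2) =
      (F ((n:ℤ) - 3) : ℝ) * G k + (F ((n:ℤ) - 2) : ℝ) * G (k + 1) := by
    have h := (shift ((n:ℤ) - 2)).1
    rwa [show k + ((n:ℤ) - 2) = k + (n:ℤ) - 2 by ring,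
      show (n:ℤ) - 2 - 1 = (n:ℤ) - 3 by ring] at h
  have gn1 : G (k + (n:ℤ) - 1) =
      (F ((n:ℤ) - 2) : ℝ) * G k + (F ((n:ℤ) - 1) : ℝ) * G (k + 1) := by
    have h := (shift ((n:ℤ) - 1)).1
    rwa [show k + ((n:ℤ) - 1) = k + (n:ℤ) - 1 by ring,
      show (n:ℤ) - 1 - 1 = (n:ℤ) - 2 by ring] at h
  have gn0 : G (k + (n:ℤ)) =
      (F ((n:ℤ) - 1) : ℝ) * G k + (F (n:ℤ) : ℝ) * G (k + 1) := by
    exact (shift (n:ℤ)).1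
  have gnp1 : G (k + (n:ℤ) + 1) =
      (F (n:ℤ) : ℝ) * G k + (F ((n:ℤ) + 1) : ℝ) * G (k + 1) := by
    exact (shift (n:ℤ)).2
  have gnp2 : G (k + (n:ℤ) + 2) =
      (F ((n:ℤ) + 1) : ℝ) * G k + (F ((n:ℤ) + 2) : ℝ) * G (k + 1) := by
    have h := (shift ((n:ℤ) + 1)).2
    rwa [show k + ((n:ℤ) + 1) + 1 = k + (n:ℤ) + 2 by ring,
      show (n:ℤ) + 1 + 1 = (n:ℤ) + 2 by ring] at h
  -- Fibonacci index reductions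
  have fZ1 : F ((n:ℤ) - 1) = F ((n:ℤ) + 1) - F (n:ℤ) := by
    have h := hF ((n:ℤ) + 1)
    rw [show (n:ℤ) + 1 - 1 = (n:ℤ) by ring, show (n:ℤ) + 1 - 2 = (n:ℤ) - 1 by ring] at h
    omega
  have fZ2 : F ((n:ℤ) - 2) = 2 * F (n:ℤ) - F ((n:ℤ) + 1) := by
    have h := hF (n:ℤ)
    rw [show (n:ℤ) - 1 = (n:ℤ) - 1 by ring] at h
    omega
  have fZ3 : F ((n:ℤ) - 3) = 2 * F ((n:ℤ) + 1) - 3 * F (n:ℤ) := by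
    have h := hF ((n:ℤ) - 1)
    rw [show (n:ℤ) - 1 - 1 = (n:ℤ) - 2 by ring,
      show (n:ℤ) - 1 - 2 = (n:ℤ) - 3 by ring] at h
    omega
  have fZ4 : F ((n:ℤ) - 4) = 5 * F (n:ℤ) - 3 * F ((n:ℤ) + 1) := by
    have h := hF ((n:ℤ) - 2)
    rw [show (n:ℤ) - 2 - 1 = (n:ℤ) - 3 by ring,
      show (n:ℤ) - 2 - 2 = (n:ℤ) - 4 by ring] at h
    omega
  have fP2 : F ((n:ℤ) + 2) = F ((n:ℤ) + 1) + F (n:ℤ) := hF' (n:ℤ)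
  obtain ⟨fD0, fD1⟩ := doub n
  have fD2 : F (2 * (n:ℤ) - 2) =
      F (n:ℤ) * (2 * F ((n:ℤ) + 1) - F (n:ℤ)) - (F (n:ℤ) ^ 2 + (F ((n:ℤ) + 1) - F (n:ℤ)) ^ 2) := by
    have h := hF (2 * (n:ℤ))
    rw [show 2 * (n:ℤ) - 1 = 2 * (n:ℤ) - 1 by ring] at h
    omega
  have cassR : ((F ((n:ℤ) + 1) : ℝ) * ((F ((n:ℤ) + 1) : ℝ) - (F (n:ℤ) : ℝ)) -
      (F (n:ℤ) : ℝ) ^ 2) ^ 2 = 1 := by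
    have h := cass n
    rw [fZ1] at h
    exact_mod_cast congrArg (fun z : ℤ => (z : ℝ)) h
  rw [S1 (2 * n), S2 (2 * n)]
  push_cast
  rw [g2n, g2n1, gm1, gn3, gn2, gn1, gn0, gnp1, gnp2]
  push_cast [fZ1, fZ2, fZ3, fZ4, fP2, fD0, fD1, fD2]
  set P := ((F (n:ℤ) : ℤ) : ℝ) with hP
  set Q := ((F ((n:ℤ) + 1) : ℤ) : ℝ) with hQ
  set v := G k with hv
  set w := G (k + 1) with hw
  linear_combination ((-6)*v*w^3 + (18)*v^2*w^2 + (-24)*v^3*w + (12)*v^4 + (6)*Q^4*v*w^3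
    + (-18)*Q^4*v^2*w^2 + (24)*Q^4*v^3*w + (-12)*Q^4*v^4 + (12)*P*Q^3*w^4
    + (-72)*P*Q^3*v*w^3 + (216)*P*Q^3*v^2*w^2 + (-264)*P*Q^3*v^3*w + (120)*P*Q^3*v^4
    + (-30)*P^2*Q^2*w^4 + (240)*P^2*Q^2*v*w^3 + (-648)*P^2*Q^2*v^2*w^2
    + (780)*P^2*Q^2*v^3*w + (-348)*P^2*Q^2*v^4 + (36)*P^3*Q*w^4 + (-264)*P^3*Q*v*w^3
    + (720)*P^3*Q*v^2*w^2 + (-864)*P^3*Q*v^3*w + (384)*P^3*Q*v^4 + (-12)*P^4*w^4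
    + (90)*P^4*v*w^3 + (-252)*P^4*v^2*w^2 + (306)*P^4*v^3*w + (-138)*P^4*v^4) * cassR
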